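/- arXiv:nlin/0307052 — 2 statements merged into one kernel-verified Lean document; each statement's English description precedes it below -/
import Mathlib

section
/- If A and B are n×n real symmetric matrices with zero row sums and nonpositive off-diagonal entries (i.e., A, B ∈ W), then λ2(A + B) ≥ λ2(A) + λ2(B). -/
open Matrix

/-- `W` : symmetric real matrices with zero row sums and nonpositive off-diagonal entries. -/
def memW {n : ℕ} (A : Matrix (Fin n) (Fin n) ℝ) : Prop :=
  A.IsSymm ∧ (∀ i, ∑ j, A i j = 0) ∧ ∀ i j, i ≠ j → A i j ≤ 0

/-- The second smallest eigenvalue of a matrix in `W` (for `n ≥ 2`), characterized as the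
minimum of `xᵀ A x` over real vectors `x` with `∑ i, x i = 0` and `‖x‖ = 1`. -/
noncomputable def lambda2 {n : ℕ} (A : Matrix (Fin n) (Fin n) ℝ) : ℝ :=
  sInf {r : ℝ | ∃ x : Fin n → ℝ, (∑ i, x i) = 0 ∧ (∑ i, (x i) ^ 2) = 1 ∧
    r = x ⬝ᵥ A.mulVec x}

lemma quad_eq {n : ℕ} (A : Matrix (Fin n) (Fin n) ℝ) (x : Fin n → ℝ) :
    x ⬝ᵥ A.mulVec x = ∑ i, ∑ j, A i j * x i * x j := by
  simp only [dotProduct, mulVec, Finset.mul_sum]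
  refine Finset.sum_congr rfl fun i _ => Finset.sum_congr rfl fun j _ => by ring

lemma quad_nonneg {n : ℕ} {A : Matrix (Fin n) (Fin n) ℝ} (hA : memW A) (x : Fin n → ℝ) :
    0 ≤ x ⬝ᵥ A.mulVec x := by
  obtain ⟨hsymm, hrow, hoff⟩ := hA
  have hS1 : ∑ i, ∑ j, A i j * (x i) ^ 2 = 0 := by
    refine Finset.sum_eq_zero fun i _ => ?_
    rw [← Finset.sum_mul, hrow i, zero_mul]
  have hS2 : ∑ i, ∑ j, A i j * (x j) ^ 2 = 0 := by
    rw [Finset.sum_comm]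
    refine Finset.sum_eq_zero fun j _ => ?_
    have : ∑ i, A i j * x j ^ 2 = (∑ i, A j i) * x j ^ 2 := by
      rw [Finset.sum_mul]
      refine Finset.sum_congr rfl fun i _ => ?_
      rw [← hsymm.apply i j]
    rw [this, hrow j, zero_mul]
  have hpos : 0 ≤ ∑ i, ∑ j, (-A i j) * (x i - x j) ^ 2 := by
    refine Finset.sum_nonneg fun i _ => Finset.sum_nonneg fun j _ => ?_
    rcases eq_or_ne i j with rfl | hij
    · simp
    · exact mul_nonneg (neg_nonneg.2 (hoff i j hij)) (sq_nonneg _)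
  have expand : ∑ i, ∑ j, (-A i j) * (x i - x j) ^ 2 =
      (∑ i, ∑ j, A i j * x i * x j) * 2 - (∑ i, ∑ j, A i j * (x i)^2)
        - (∑ i, ∑ j, A i j * (x j)^2) := by
    rw [Finset.sum_mul, ← Finset.sum_sub_distrib, ← Finset.sum_sub_distrib]
    refine Finset.sum_congr rfl fun i _ => ?_
    rw [Finset.sum_mul, ← Finset.sum_sub_distrib, ← Finset.sum_sub_distrib]
    refine Finset.sum_congr rfl fun j _ => by ring
  rw [quad_eq]
  nlinarith [hpos, expand, hS1, hS2]

lemma set_nonempty {n : ℕ} (hn : 2 ≤ n) (A : Matrix (Fin n) (Fin n) ℝ) :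
    {r : ℝ | ∃ x : Fin n → ℝ, (∑ i, x i) = 0 ∧ (∑ i, (x i) ^ 2) = 1 ∧
      r = x ⬝ᵥ A.mulVec x}.Nonempty := by
  set i0 : Fin n := ⟨0, by omega⟩
  set i1 : Fin n := ⟨1, by omega⟩
  have hne : i0 ≠ i1 := by simp [i0, i1, Fin.ext_iff]
  set a : ℝ := (Real.sqrt 2)⁻¹ with ha
  have ha2 : a ^ 2 = 1 / 2 := by
    rw [ha, inv_pow, Real.sq_sqrt (by norm_num : (0:ℝ) ≤ 2)]
    norm_num
  set x : Fin n → ℝ := fun i => (Pi.single i0 a : Fin n → ℝ) i - (Pi.single i1 a : Fin n → ℝ) i with hx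
  refine ⟨x ⬝ᵥ A.mulVec x, x, ?_, ?_, rfl⟩
  · simp [hx, Finset.sum_sub_distrib, Finset.sum_pi_single']
  · have key : ∀ i, (x i) ^ 2 = (if i = i0 then a ^ 2 else 0) + (if i = i1 then a ^ 2 else 0) := by
      intro i
      simp only [hx, Pi.single_apply]
      have hne' : ¬ i1 = i0 := fun h => hne h.symm
      by_cases h0 : i = i0 <;> by_cases h1 : i = i1 <;>
        simp [h0, h1, hne, hne']
    simp_rw [key, Finset.sum_add_distrib, Finset.sum_ite_eq' Finset.univ]
    simp [ha2]
    norm_num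

/-- Super-additivity of `λ₂`: if `A, B ∈ W` then `λ₂(A + B) ≥ λ₂(A) + λ₂(B)`. -/
theorem lambda2_superadditive {n : ℕ} (hn : 2 ≤ n)
    (A B : Matrix (Fin n) (Fin n) ℝ) (hA : memW A) (hB : memW B) :
    lambda2 (A + B) ≥ lambda2 A + lambda2 B := by
  have hbbA : BddBelow {r : ℝ | ∃ x : Fin n → ℝ, (∑ i, x i) = 0 ∧ (∑ i, (x i) ^ 2) = 1 ∧
      r = x ⬝ᵥ A.mulVec x} :=
    ⟨0, fun r ⟨x, _, _, hr⟩ => hr ▸ quad_nonneg hA x⟩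
  have hbbB : BddBelow {r : ℝ | ∃ x : Fin n → ℝ, (∑ i, x i) = 0 ∧ (∑ i, (x i) ^ 2) = 1 ∧
      r = x ⬝ᵥ B.mulVec x} :=
    ⟨0, fun r ⟨x, _, _, hr⟩ => hr ▸ quad_nonneg hB x⟩
  rw [ge_iff_le]
  unfold lambda2
  refine le_csInf (set_nonempty hn _) ?_
  rintro r ⟨x, hx0, hx1, rfl⟩
  have hsplit : x ⬝ᵥ (A + B).mulVec x = x ⬝ᵥ A.mulVec x + x ⬝ᵥ B.mulVec x := by
    rw [Matrix.add_mulVec, dotProduct_add]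
  rw [hsplit]
  have h1 := csInf_le hbbA ⟨x, hx0, hx1, rfl⟩
  have h2 := csInf_le hbbB ⟨x, hx0, hx1, rfl⟩
  linarith
end

section
/- Given 0 < p ≤ 1, r > 0, and s ∈ ℝ, for all sufficiently large n there exists an n×n matrix ΔG in W such that: (i) λ2(ΔG) > s; (ii) the number of nonzero off-diagonal entries of ΔG is at most p·n(n−1); and (iii) every off-diagonal entry of ΔG has absolute value at most r. -/
open Matrix

/-- Given `0 < p ≤ 1`, `r > 0` and `s`, for all sufficiently large `n` there exists an
`n × n` matrix `ΔG ∈ W` with `λ₂(ΔG) > s`, at most a fraction `p` of whose off-diagonal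
entries are nonzero, and each of whose off-diagonal entries is at most `r` in absolute
value. -/
theorem exists_sparse_small_perturbation_with_large_lambda2
    (p : ℝ) (hp0 : 0 < p) (hp1 : p ≤ 1) (r : ℝ) (hr : 0 < r) (s : ℝ) :
    ∃ N : ℕ, ∀ n : ℕ, N ≤ n →
      ∃ ΔG : Matrix (Fin n) (Fin n) ℝ, memW ΔG ∧
        lambda2 ΔG > s ∧
        ({q : Fin n × Fin n | q.1 ≠ q.2 ∧ ΔG q.1 q.2 ≠ 0}.ncard : ℝ) ≤ p * n * (n - 1) ∧
        ∀ i j, i ≠ j → |ΔG i j| ≤ r := by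
  classical
  set a : ℕ := ⌈s / r⌉₊ + 1 with ha_def
  have ha1 : 1 ≤ a := Nat.le_add_left 1 _
  have hra : s < r * a := by
    have h1 : s / r ≤ (⌈s / r⌉₊ : ℝ) := Nat.le_ceil _
    have h2 : (⌈s / r⌉₊ : ℝ) < a := by
      rw [ha_def]; push_cast; linarith
    have : s / r < a := lt_of_le_of_lt h1 h2
    calc s = (s / r) * r := by field_simp
    _ < (a : ℝ) * r := by exact mul_lt_mul_of_pos_right this hr
    _ = r * a := by ring
  refine ⟨max (2 * a + 2) (⌈(2 * a : ℝ) / p⌉₊ + 1), fun n hn => ?_⟩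
  have h2a2 : 2 * a + 2 ≤ n := le_trans (le_max_left _ _) hn
  have h2a : 2 * a ≤ n := by omega
  have han : a < n := by omega
  have hanR : (a : ℝ) ≤ (n : ℝ) := by exact_mod_cast han.le
  have h2aR : (a : ℝ) ≤ (n : ℝ) - a := by
    have : (2 * a : ℝ) ≤ n := by exact_mod_cast h2a
    push_cast at this ⊢; linarith
  have hpn : (2 * a : ℝ) ≤ p * ((n : ℝ) - 1) := by
    have h1 : ⌈(2 * a : ℝ) / p⌉₊ + 1 ≤ n := le_trans (le_max_right _ _) hn
    have h2 : (2 * a : ℝ) / p ≤ (⌈(2 * a : ℝ) / p⌉₊ : ℝ) := Nat.le_ceil _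
    have h3 : (⌈(2 * a : ℝ) / p⌉₊ : ℝ) ≤ (n : ℝ) - 1 := by
      have h5 : (((⌈(2 * a : ℝ) / p⌉₊ : ℕ) : ℝ)) + 1 ≤ ((n : ℕ) : ℝ) := by
        exact_mod_cast h1
      linarith
    have h4 : (2 * a : ℝ) / p ≤ (n : ℝ) - 1 := le_trans h2 h3
    calc (2 * a : ℝ) = ((2 * a : ℝ) / p) * p := by field_simp
    _ ≤ ((n : ℝ) - 1) * p := mul_le_mul_of_nonneg_right h4 hp0.le
    _ = p * ((n : ℝ) - 1) := by ring
  -- the matrix: scaled Laplacian of the complete bipartite graph K_{a, n-a}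
  set P : Fin n → Prop := fun i => (i : ℕ) < a with hP_def
  set d : Fin n → ℝ := fun i => if (i : ℕ) < a then (n : ℝ) - a else a with hd_def
  set A : Matrix (Fin n) (Fin n) ℝ := fun i j =>
    r * ((if i = j then d i else 0) - (if ((i : ℕ) < a ↔ (j : ℕ) < a) then 0 else 1))
    with hA_def
  set S : Finset (Fin n) := Finset.univ.filter (fun i => (i : ℕ) < a) with hS_def
  set T : Finset (Fin n) := Finset.univ.filter (fun i => ¬ (i : ℕ) < a) with hT_def
  have hScard : S.card = a := by
    have : S = Finset.Iio (⟨a, han⟩ : Fin n) := by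
      ext i; simp [hS_def, Finset.mem_Iio, Fin.lt_def]
    rw [this, Fin.card_Iio]
  have hST : S.card + T.card = n := by
    rw [hS_def, hT_def]
    rw [Finset.card_filter_add_card_filter_not]
    simp
  have hTcard : T.card = n - a := by omega
  have hTcardR : (T.card : ℝ) = (n : ℝ) - a := by
    rw [hTcard]; push_cast [Nat.cast_sub han.le]; ring
  -- off-diagonal entries
  have hoff : ∀ i j : Fin n, i ≠ j →
      A i j = - (r * (if ((i : ℕ) < a ↔ (j : ℕ) < a) then 0 else 1)) := by
    intro i j hij
    simp only [hA_def, if_neg hij]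
    ring
  -- split sums over S and T
  have hsplit : ∀ f : Fin n → ℝ, ∑ i, f i = (∑ i ∈ S, f i) + (∑ i ∈ T, f i) := by
    intro f
    rw [hS_def, hT_def, Finset.sum_filter_add_sum_filter_not]
  -- inner ones
  have hcount : ∀ i : Fin n,
      (∑ j : Fin n, (if ((i : ℕ) < a ↔ (j : ℕ) < a) then (0:ℝ) else 1)) = d i := by
    intro i
    by_cases hi : (i : ℕ) < a
    · have : ∀ j : Fin n, (if ((i : ℕ) < a ↔ (j : ℕ) < a) then (0:ℝ) else 1)
          = (if ¬ (j : ℕ) < a then (1:ℝ) else 0) := by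
        intro j; by_cases hj : (j : ℕ) < a <;> simp [hi, hj]
      rw [Finset.sum_congr rfl (fun j _ => this j), Finset.sum_boole]
      simp only [hd_def, if_pos hi]
      rw [← hT_def, hTcardR]
    · have : ∀ j : Fin n, (if ((i : ℕ) < a ↔ (j : ℕ) < a) then (0:ℝ) else 1)
          = (if (j : ℕ) < a then (1:ℝ) else 0) := by
        intro j; by_cases hj : (j : ℕ) < a <;> simp [hi, hj]
      rw [Finset.sum_congr rfl (fun j _ => this j), Finset.sum_boole]
      simp only [hd_def, if_neg hi]
      rw [← hS_def, hScard]
  -- membership in W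
  have hmemW : memW A := by
    refine ⟨?_, ?_, ?_⟩
    · ext i j
      rw [Matrix.transpose_apply]; simp only [hA_def]
      by_cases hij : j = i
      · subst hij; rfl
      · rw [if_neg hij, if_neg (fun h : i = j => hij h.symm)]
        by_cases h : (j : ℕ) < a ↔ (i : ℕ) < a
        · rw [if_pos h, if_pos h.symm]
        · rw [if_neg h, if_neg (fun h' : ((i : ℕ) < a ↔ (j : ℕ) < a) => h h'.symm)]
    · intro i
      have h1 : ∑ j : Fin n, A i j = r * ((∑ j : Fin n, (if i = j then d i else 0))
          - ∑ j : Fin n, (if ((i : ℕ) < a ↔ (j : ℕ) < a) then (0:ℝ) else 1)) := by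
        simp only [hA_def]
        rw [← Finset.mul_sum, Finset.sum_sub_distrib]
      rw [h1, Finset.sum_ite_eq Finset.univ i (fun _ => d i), hcount i]
      simp only [Finset.mem_univ, if_true]
      ring
    · intro i j hij
      rw [hoff i j hij]
      by_cases h : ((i : ℕ) < a ↔ (j : ℕ) < a) <;> simp [h, hr.le]
  -- quadratic form
  have hQF : ∀ x : Fin n → ℝ, (∑ i, x i) = 0 →
      x ⬝ᵥ A.mulVec x = r * (((n:ℝ) - a) * (∑ i ∈ S, x i ^ 2) + a * (∑ i ∈ T, x i ^ 2)
        + 2 * (∑ i ∈ S, x i) ^ 2) := by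
    intro x hx0
    have hu : (∑ i ∈ T, x i) = - (∑ i ∈ S, x i) := by
      have := hsplit x
      rw [hx0] at this; linarith
    have hinner : ∀ i : Fin n, (A.mulVec x) i
        = r * (d i * x i - ∑ j : Fin n, (if ((i : ℕ) < a ↔ (j : ℕ) < a) then (0:ℝ) else x j)) := by
      intro i
      have e : ∀ j : Fin n, A i j * x j
          = r * ((if i = j then d i * x j else 0)
            - (if ((i : ℕ) < a ↔ (j : ℕ) < a) then (0:ℝ) else x j)) := by
        intro j
        simp only [hA_def]
        by_cases hij : i = j
        · subst hij; simp; ring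
        · by_cases h : ((i : ℕ) < a ↔ (j : ℕ) < a) <;> simp [hij, h]
      calc (A.mulVec x) i = ∑ j : Fin n, A i j * x j := by
            simp [Matrix.mulVec, dotProduct]
      _ = ∑ j : Fin n, r * ((if i = j then d i * x j else 0)
            - (if ((i : ℕ) < a ↔ (j : ℕ) < a) then (0:ℝ) else x j)) :=
          Finset.sum_congr rfl (fun j _ => e j)
      _ = r * ((∑ j : Fin n, (if i = j then d i * x j else 0))
            - ∑ j : Fin n, (if ((i : ℕ) < a ↔ (j : ℕ) < a) then (0:ℝ) else x j)) := by
          rw [← Finset.mul_sum, Finset.sum_sub_distrib]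
      _ = r * (d i * x i - ∑ j : Fin n, (if ((i : ℕ) < a ↔ (j : ℕ) < a) then (0:ℝ) else x j)) := by
          rw [Finset.sum_ite_eq Finset.univ i (fun j => d i * x j)]
          simp
    have hcross : ∀ i : Fin n, (∑ j : Fin n, (if ((i : ℕ) < a ↔ (j : ℕ) < a) then (0:ℝ) else x j))
        = if (i : ℕ) < a then (∑ j ∈ T, x j) else (∑ j ∈ S, x j) := by
      intro i
      by_cases hi : (i : ℕ) < a
      · rw [if_pos hi]
        rw [hT_def, Finset.sum_filter]
        congr 1; ext j
        by_cases hj : (j : ℕ) < a <;> simp [hi, hj]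
      · rw [if_neg hi]
        rw [hS_def, Finset.sum_filter]
        congr 1; ext j
        by_cases hj : (j : ℕ) < a <;> simp [hi, hj]
    have : x ⬝ᵥ A.mulVec x = ∑ i, x i * (r * (d i * x i -
        (if (i : ℕ) < a then (∑ j ∈ T, x j) else (∑ j ∈ S, x j)))) := by
      simp only [dotProduct]
      refine Finset.sum_congr rfl (fun i _ => ?_)
      rw [hinner i, hcross i]
    rw [this, hsplit (fun i => x i * (r * (d i * x i -
        (if (i : ℕ) < a then (∑ j ∈ T, x j) else (∑ j ∈ S, x j)))))]
    have hSterm : ∀ i ∈ S, x i * (r * (d i * x i -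
        (if (i : ℕ) < a then (∑ j ∈ T, x j) else (∑ j ∈ S, x j))))
        = r * (((n:ℝ) - a) * x i ^ 2 - x i * (∑ j ∈ T, x j)) := by
      intro i hi
      rw [hS_def, Finset.mem_filter] at hi
      rw [if_pos hi.2]
      simp only [hd_def, if_pos hi.2]
      ring
    have hTterm : ∀ i ∈ T, x i * (r * (d i * x i -
        (if (i : ℕ) < a then (∑ j ∈ T, x j) else (∑ j ∈ S, x j))))
        = r * ((a:ℝ) * x i ^ 2 - x i * (∑ j ∈ S, x j)) := by
      intro i hi
      rw [hT_def, Finset.mem_filter] at hi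
      rw [if_neg hi.2]
      simp only [hd_def, if_neg hi.2]
      ring
    rw [Finset.sum_congr rfl hSterm, Finset.sum_congr rfl hTterm]
    rw [← Finset.mul_sum, ← Finset.mul_sum, ← mul_add]
    congr 1
    rw [Finset.sum_sub_distrib, Finset.sum_sub_distrib, ← Finset.mul_sum, ← Finset.mul_sum,
      ← Finset.sum_mul, ← Finset.sum_mul, hu]
    ring
  -- lower bound for lambda2
  have hlb : r * a ≤ lambda2 A := by
    have hn2 : 2 ≤ n := by omega
    have h0n : 0 < n := by omega
    have h1n : 1 < n := by omega
    set i0 : Fin n := ⟨0, h0n⟩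
    set i1 : Fin n := ⟨1, h1n⟩
    have hi01 : i0 ≠ i1 := by
      intro h
      have := Fin.val_eq_of_eq h
      simp [i0, i1] at this
    set t : ℝ := Real.sqrt 2 / 2 with ht_def
    have ht2 : t ^ 2 = 1 / 2 := by
      rw [ht_def, div_pow, Real.sq_sqrt (by norm_num : (0:ℝ) ≤ 2)]
      norm_num
    set x0 : Fin n → ℝ := fun i => (if i = i0 then t else 0) + (if i = i1 then -t else 0)
      with hx0_def
    have hx0sum : ∑ i, x0 i = 0 := by
      simp only [hx0_def, Finset.sum_add_distrib]
      rw [Finset.sum_ite_eq' Finset.univ i0 (fun _ => t),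
        Finset.sum_ite_eq' Finset.univ i1 (fun _ => -t)]
      simp
    have hx0sq : ∑ i, (x0 i) ^ 2 = 1 := by
      have : ∀ i : Fin n, (x0 i) ^ 2
          = (if i = i0 then t ^ 2 else 0) + (if i = i1 then t ^ 2 else 0) := by
        intro i
        by_cases h0 : i = i0
        · subst h0; rw [hx0_def]; simp [if_neg hi01]
        · by_cases h1 : i = i1
          · subst h1; rw [hx0_def]
            simp [if_neg (fun h : i1 = i0 => hi01 h.symm)]
          · rw [hx0_def]; simp [h0, h1]
      rw [Finset.sum_congr rfl (fun i _ => this i), Finset.sum_add_distrib,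
        Finset.sum_ite_eq' Finset.univ i0 (fun _ => t ^ 2),
        Finset.sum_ite_eq' Finset.univ i1 (fun _ => t ^ 2)]
      simp [ht2]
      norm_num
    have hne : {q : ℝ | ∃ x : Fin n → ℝ, (∑ i, x i) = 0 ∧ (∑ i, (x i) ^ 2) = 1 ∧
        q = x ⬝ᵥ A.mulVec x}.Nonempty :=
      ⟨x0 ⬝ᵥ A.mulVec x0, x0, hx0sum, hx0sq, rfl⟩
    refine le_csInf hne ?_
    rintro q ⟨x, hx0, hx1, rfl⟩
    rw [hQF x hx0]
    have hA' : (0:ℝ) ≤ ∑ i ∈ S, x i ^ 2 := Finset.sum_nonneg (fun i _ => sq_nonneg _)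
    have hB' : (0:ℝ) ≤ ∑ i ∈ T, x i ^ 2 := Finset.sum_nonneg (fun i _ => sq_nonneg _)
    have hsum1 : (∑ i ∈ S, x i ^ 2) + (∑ i ∈ T, x i ^ 2) = 1 := by
      rw [← hsplit (fun i => x i ^ 2)]; exact hx1
    have hkey : (a : ℝ) ≤ ((n:ℝ) - a) * (∑ i ∈ S, x i ^ 2) + a * (∑ i ∈ T, x i ^ 2)
        + 2 * (∑ i ∈ S, x i) ^ 2 := by
      nlinarith [sq_nonneg (∑ i ∈ S, x i),
        mul_nonneg (by linarith : (0:ℝ) ≤ (n:ℝ) - a - a) hA']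
    exact mul_le_mul_of_nonneg_left hkey hr.le
  -- the count bound
  have hcountbd : (({q : Fin n × Fin n | q.1 ≠ q.2 ∧ A q.1 q.2 ≠ 0}.ncard : ℝ))
      ≤ p * n * ((n:ℝ) - 1) := by
    set F : Finset (Fin n × Fin n) := (S ×ˢ T) ∪ (T ×ˢ S) with hF_def
    have hsub : {q : Fin n × Fin n | q.1 ≠ q.2 ∧ A q.1 q.2 ≠ 0} ⊆ ↑F := by
      rintro ⟨i, j⟩ ⟨hij, hA0⟩
      rw [hoff i j hij] at hA0
      by_cases h : ((i : ℕ) < a ↔ (j : ℕ) < a)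
      · simp [h] at hA0
      · simp only [hF_def, Finset.coe_union, Finset.coe_product, Set.mem_union,
          Set.mem_prod, Finset.mem_coe, hS_def, hT_def, Finset.mem_filter, Finset.mem_univ,
          true_and]
        by_cases hi : (i : ℕ) < a
        · left; refine ⟨hi, ?_⟩; tauto
        · right; refine ⟨hi, ?_⟩; tauto
    have hncard : {q : Fin n × Fin n | q.1 ≠ q.2 ∧ A q.1 q.2 ≠ 0}.ncard ≤ F.card := by
      have := Set.ncard_le_ncard hsub (F : Set (Fin n × Fin n)).toFinite
      rwa [Set.ncard_coe_finset] at this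
    have hFcard : F.card ≤ a * (n - a) + (n - a) * a := by
      calc F.card ≤ (S ×ˢ T).card + (T ×ˢ S).card := Finset.card_union_le _ _
      _ = a * (n - a) + (n - a) * a := by
        rw [Finset.card_product, Finset.card_product, hScard, hTcard]
    have hFR : (F.card : ℝ) ≤ (a : ℝ) * ((n:ℝ) - a) + ((n:ℝ) - a) * a := by
      have : ((a * (n - a) + (n - a) * a : ℕ) : ℝ)
          = (a : ℝ) * ((n:ℝ) - a) + ((n:ℝ) - a) * a := by
        push_cast [Nat.cast_sub han.le]; ring
      calc (F.card : ℝ) ≤ ((a * (n - a) + (n - a) * a : ℕ) : ℝ) := by exact_mod_cast hFcard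
      _ = _ := this
    have haR : (0:ℝ) ≤ a := Nat.cast_nonneg a
    have hnR : (0:ℝ) ≤ n := Nat.cast_nonneg n
    have key : (2 * a : ℝ) * n ≤ p * ((n:ℝ) - 1) * n :=
      mul_le_mul_of_nonneg_right hpn hnR
    calc (({q : Fin n × Fin n | q.1 ≠ q.2 ∧ A q.1 q.2 ≠ 0}.ncard : ℝ)) ≤ (F.card : ℝ) := by
          exact_mod_cast hncard
    _ ≤ (a : ℝ) * ((n:ℝ) - a) + ((n:ℝ) - a) * a := hFR
    _ ≤ p * n * ((n:ℝ) - 1) := by nlinarith [sq_nonneg (a:ℝ)]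
  refine ⟨A, hmemW, ?_, hcountbd, ?_⟩
  · exact lt_of_lt_of_le hra hlb
  · intro i j hij
    rw [hoff i j hij]
    by_cases h : ((i : ℕ) < a ↔ (j : ℕ) < a) <;> simp [h, abs_of_pos hr, hr.le]
end
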